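/- Let G be a graph, u and v vertices, k and t positive integers, and suppose |C(G − v)| ≥ ℓ·|C(G − v − u)| for some ℓ > 0. If c is uniformly random in C(G − v), then P(|L_c(u)| ≤ t) ≤ t/ℓ. -/

import Mathlib

/-- The finset of proper `k`-colorings of a simple graph on a finite vertex type. -/
def properColorings {W : Type} [Fintype W] [DecidableEq W] (G : SimpleGraph W)
    [DecidableRel G.Adj] (k : ℕ) : Finset (W → Fin k) :=
  Finset.univ.filter fun c => ∀ u w, G.Adj u w → c u ≠ c w

/-- The graph obtained from `G` by deleting the vertex `v`. -/
def deleteVertex {V : Type} (G : SimpleGraph V) (v : V) : SimpleGraph {u : V // u ≠ v} where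
  Adj a b := G.Adj a b
  symm := ⟨fun _ _ h => G.adj_symm h⟩
  loopless := ⟨fun _ h => G.irrefl h⟩

instance {V : Type} (G : SimpleGraph V) [DecidableRel G.Adj] (v : V) :
    DecidableRel (deleteVertex G v).Adj :=
  fun a b => inferInstanceAs (Decidable (G.Adj a b))

/-- The graph obtained from `G` by deleting two vertices `v` and `u`. -/
def deleteTwo {V : Type} (G : SimpleGraph V) (v u : V) :
    SimpleGraph {w : V // w ≠ v ∧ w ≠ u} where
  Adj a b := G.Adj a b
  symm := ⟨fun _ _ h => G.adj_symm h⟩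
  loopless := ⟨fun _ h => G.irrefl h⟩

instance {V : Type} (G : SimpleGraph V) [DecidableRel G.Adj] (v u : V) :
    DecidableRel (deleteTwo G v u).Adj :=
  fun a b => inferInstanceAs (Decidable (G.Adj a b))

/-- Colors in `[k]` not used by `c` on the neighborhood of `u` inside `G - v`. -/
def availColors {V : Type} [Fintype V] [DecidableEq V] (G : SimpleGraph V)
    [DecidableRel G.Adj] (v u : V) {k : ℕ} (c : {w : V // w ≠ v} → Fin k) :
    Finset (Fin k) :=
  Finset.univ.filter fun j => ∀ w : {w : V // w ≠ v}, G.Adj u w → c w ≠ j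

theorem prob_few_available_le {V : Type} [Fintype V] [DecidableEq V]
    (G : SimpleGraph V) [DecidableRel G.Adj] (v u : V) (k t : ℕ) (hk : 0 < k) (ht : 0 < t)
    (ℓ : ℝ) (hℓ : 0 < ℓ)
    (hind : ℓ * ((properColorings (deleteTwo G v u) k).card : ℝ) ≤
      ((properColorings (deleteVertex G v) k).card : ℝ)) :
    (((properColorings (deleteVertex G v) k).filter
        (fun c => (availColors G v u c).card ≤ t)).card : ℝ) /
      ((properColorings (deleteVertex G v) k).card : ℝ) ≤ t / ℓ := by
  classical
  set C1 := properColorings (deleteVertex G v) k with hC1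
  set C2 := properColorings (deleteTwo G v u) k with hC2
  set S := C1.filter (fun c => (availColors G v u c).card ≤ t) with hS
  set f : ({w : V // w ≠ v} → Fin k) → ({w : V // w ≠ v ∧ w ≠ u} → Fin k) :=
    fun c w => c ⟨w.1, w.2.1⟩ with hf
  have keyNat : S.card ≤ t * C2.card := by
    have h1 : S.card ≤ t * (S.image f).card := by
      apply Finset.card_le_mul_card_image
      intro a ha
      obtain ⟨c₀, hc₀S, hc₀a⟩ := Finset.mem_image.mp ha
      by_cases huv : u = v
      · refine le_trans (Finset.card_le_one.mpr ?_) ht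
        intro c₁ h₁ c₂ h₂
        have e₁ := (Finset.mem_filter.mp h₁).2
        have e₂ := (Finset.mem_filter.mp h₂).2
        funext w
        have hw : w.1 ≠ u := huv ▸ w.2
        have := congrFun (e₁.trans e₂.symm) ⟨w.1, w.2, hw⟩
        exact this
      · have hc₀C1 := (Finset.mem_filter.mp hc₀S).1
        have hc₀t : (availColors G v u c₀).card ≤ t :=
          (Finset.mem_filter.mp hc₀S).2
        refine le_trans (Finset.card_le_card_of_injOn
          (fun c => c ⟨u, huv⟩) ?_ ?_) hc₀t
        · intro c hc
          have hcfib := Finset.mem_filter.mp hc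
          have hcS := hcfib.1
          have hcC1 : c ∈ C1 := (Finset.mem_filter.mp hcS).1
          have hcprop : ∀ a b, (deleteVertex G v).Adj a b → c a ≠ c b :=
            (Finset.mem_filter.mp hcC1).2
          simp only [availColors, Finset.mem_coe, Finset.mem_filter, Finset.mem_univ, true_and]
          intro w hw
          have hwu : w.1 ≠ u := fun h => G.loopless.irrefl u (h ▸ hw)
          have hcw : c₀ w = c w := by
            have := congrFun (hc₀a.trans hcfib.2.symm) ⟨w.1, w.2, hwu⟩
            exact this
          rw [hcw]
          exact fun h => hcprop ⟨u, huv⟩ w hw h.symm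
        · intro c₁ h₁ c₂ h₂ heq
          have e₁ := (Finset.mem_filter.mp h₁).2
          have e₂ := (Finset.mem_filter.mp h₂).2
          funext w
          by_cases hw : w.1 = u
          · have hw1 : w = ⟨u, huv⟩ := Subtype.ext hw
            rw [hw1]; exact heq
          · exact congrFun (e₁.trans e₂.symm) ⟨w.1, w.2, hw⟩
    have h2 : S.image f ⊆ C2 := by
      intro a ha
      obtain ⟨c, hcS, hca⟩ := Finset.mem_image.mp ha
      have hcprop : ∀ a b, (deleteVertex G v).Adj a b → c a ≠ c b :=
        (Finset.mem_filter.mp (Finset.mem_filter.mp hcS).1).2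
      simp only [hC2, properColorings, Finset.mem_filter, Finset.mem_univ, true_and]
      intro x y hxy
      subst hca
      exact hcprop ⟨x.1, x.2.1⟩ ⟨y.1, y.2.1⟩ hxy
    exact le_trans h1 (Nat.mul_le_mul_left t (Finset.card_le_card h2))
  have key : (S.card : ℝ) ≤ (t : ℝ) * C2.card := by exact_mod_cast keyNat
  by_cases hC1z : (C1.card : ℝ) = 0
  · rw [hC1z, div_zero]
    positivity
  · have hC1pos : (0 : ℝ) < C1.card := lt_of_le_of_ne (Nat.cast_nonneg _) (Ne.symm hC1z)
    rw [div_le_div_iff₀ hC1pos hℓ]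
    calc (S.card : ℝ) * ℓ ≤ ((t : ℝ) * C2.card) * ℓ :=
          mul_le_mul_of_nonneg_right key hℓ.le
      _ = (t : ℝ) * (ℓ * C2.card) := by ring
      _ ≤ (t : ℝ) * C1.card := mul_le_mul_of_nonneg_left hind (Nat.cast_nonneg _)
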